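/- Let M ≥ 1 and ε > 0, and let u : ℝ × ℝ → ℝ be 2π-periodic in its second variable, twice continuously differentiable on [-M,M] × ℝ, harmonic there (∂²u/∂s² + ∂²u/∂θ² = 0), and satisfy |u| ≤ ε on [-M,M] × ℝ. Then there exist real numbers a₀, b₀ and, for every integer n ≥ 1, real numbers aₙ, bₙ, cₙ, dₙ, such that for every s ∈ [-M,M]: (1/2π) ∫₀^{2π} u(s,θ) dθ = a₀ + b₀ s, (1/π) ∫₀^{2π} u(s,θ) cos(nθ) dθ = aₙ e^{ns} + cₙ e^{-ns}, and (1/π) ∫₀^{2π} u(s,θ) sin(nθ) dθ = bₙ e^{ns} + dₙ e^{-ns}; moreover these coefficients satisfy |a₀| ≤ ε, |b₀| ≤ 2ε/M, and |aₙ|, |bₙ|, |cₙ|, |dₙ| ≤ 4 ε e^{-nM} for every n ≥ 1. -/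

import Mathlib

set_option maxHeartbeats 1000000

open Set Real Topology Filter MeasureTheory intervalIntegral

lemma const_of_deriv0 {s : Set ℝ} (hs : Convex ℝ s) {f : ℝ → ℝ}
    (hf : ∀ x ∈ s, HasDerivAt f 0 x) {x y : ℝ} (hx : x ∈ s) (hy : y ∈ s) : f x = f y := by
  have h := hs.norm_image_sub_le_of_norm_hasDerivWithin_le (f' := fun _ => (0:ℝ)) (C := 0)
    (fun z hz => (hf z hz).hasDerivWithinAt) (fun z hz => by simp) hx hy
  simp only [zero_mul, norm_le_zero_iff, sub_eq_zero] at h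
  exact h.symm

lemma extend_eq {M : ℝ} (hM : 0 < M) {f g : ℝ → ℝ}
    (hf : ContinuousOn f (Icc (-M) M)) (hg : Continuous g)
    (h : ∀ s ∈ Ioo (-M) M, f s = g s) : ∀ s ∈ Icc (-M) M, f s = g s := by
  intro s hs
  have hMM : (-M) < M := by linarith
  have hcl : s ∈ closure (Ioo (-M) M) := by
    rw [closure_Ioo hMM.ne]; exact hs
  have hne : (𝓝[Ioo (-M) M] s).NeBot := mem_closure_iff_nhdsWithin_neBot.mp hcl
  have h1 : Filter.Tendsto f (𝓝[Ioo (-M) M] s) (𝓝 (f s)) :=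
    (hf.continuousWithinAt hs).mono_left (nhdsWithin_mono _ Ioo_subset_Icc_self)
  have h2 : Filter.Tendsto f (𝓝[Ioo (-M) M] s) (𝓝 (g s)) := by
    have : Filter.Tendsto g (𝓝[Ioo (-M) M] s) (𝓝 (g s)) :=
      (hg.continuousAt).continuousWithinAt
    refine this.congr' ?_
    filter_upwards [self_mem_nhdsWithin] with x hx using (h x hx).symm
  exact tendsto_nhds_unique h1 h2

lemma ode_pos {M k : ℝ} (hM : 0 < M) (hk : 0 < k) {f f₁ : ℝ → ℝ}
    (hf : ∀ s ∈ Ioo (-M) M, HasDerivAt f (f₁ s) s)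
    (hf₁ : ∀ s ∈ Ioo (-M) M, HasDerivAt f₁ (k^2 * f s) s) :
    ∃ A C : ℝ, ∀ s ∈ Ioo (-M) M, f s = A * exp (k*s) + C * exp (-(k*s)) := by
  have hconv : Convex ℝ (Ioo (-M) M) := convex_Ioo _ _
  have h0 : (0:ℝ) ∈ Ioo (-M) M := ⟨by linarith, hM⟩
  have hgc : ∀ s ∈ Ioo (-M) M,
      (f₁ s - k * f s) * exp (k*s) = f₁ 0 - k * f 0 := by
    intro s hs
    have hg : ∀ x ∈ Ioo (-M) M,
        HasDerivAt (fun t => (f₁ t - k * f t) * exp (k*t)) 0 x := by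
      intro x hx
      have he : HasDerivAt (fun t => exp (k*t)) (exp (k*x) * k) x := by
        simpa using ((hasDerivAt_id x).const_mul k).exp
      have h := ((hf₁ x hx).sub ((hf x hx).const_mul k)).mul he
      refine h.congr_deriv ?_
      simp only [Pi.sub_apply]
      ring
    have := const_of_deriv0 hconv hg hs h0
    simpa using this
  have hrel : ∀ s ∈ Ioo (-M) M, f₁ s = k * f s + (f₁ 0 - k * f 0) * exp (-(k*s)) := by
    intro s hs
    have e1 : exp (k*s) * exp (-(k*s)) = 1 := by rw [← exp_add]; simp
    linear_combination exp (-(k*s)) * hgc s hs - (f₁ s - k * f s) * e1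
  have hψc : ∀ s ∈ Ioo (-M) M,
      2*k*(f s) * exp (-(k*s)) + (f₁ 0 - k * f 0) * exp (-(2*k*s)) =
        2*k*(f 0) + (f₁ 0 - k * f 0) := by
    intro s hs
    have hψd : ∀ x ∈ Ioo (-M) M,
        HasDerivAt (fun t => 2*k*(f t) * exp (-(k*t)) + (f₁ 0 - k * f 0) * exp (-(2*k*t))) 0 x := by
      intro x hx
      have he : HasDerivAt (fun t => exp (-(k*t))) (exp (-(k*x)) * (-k)) x := by
        simpa using (((hasDerivAt_id x).const_mul k).neg).exp
      have he2 : HasDerivAt (fun t => exp (-(2*k*t))) (exp (-(2*k*x)) * (-(2*k))) x := by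
        simpa using (((hasDerivAt_id x).const_mul (2*k)).neg).exp
      have h := (((hf x hx).const_mul (2*k)).mul he).add (he2.const_mul (f₁ 0 - k * f 0))
      refine h.congr_deriv ?_
      have hee : exp (-(k*x)) * exp (-(k*x)) = exp (-(2*k*x)) := by
        rw [← exp_add]; ring_nf
      rw [hrel x hx]
      linear_combination (2*k*(f₁ 0 - k * f 0)) * hee
    have := const_of_deriv0 hconv hψd hs h0
    simpa using this
  refine ⟨f 0 + (f₁ 0 - k * f 0)/(2*k), -(f₁ 0 - k * f 0)/(2*k), fun s hs => ?_⟩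
  have H := hψc s hs
  have e1 : exp (k*s) * exp (-(k*s)) = 1 := by rw [← exp_add]; simp
  have hee : exp (-(2*k*s)) = exp (-(k*s)) * exp (-(k*s)) := by rw [← exp_add]; ring_nf
  rw [hee] at H
  have key : 2*k*(f s) = (2*k*(f 0) + (f₁ 0 - k * f 0)) * exp (k*s)
      - (f₁ 0 - k * f 0) * exp (-(k*s)) := by
    linear_combination exp (k*s) * H - (2*k*(f s) + (f₁ 0 - k * f 0) * exp (-(k*s))) * e1
  have hk' : k ≠ 0 := hk.ne'
  field_simp
  linear_combination key

lemma ode_zero {M : ℝ} (hM : 0 < M) {f f₁ : ℝ → ℝ}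
    (hf : ∀ s ∈ Ioo (-M) M, HasDerivAt f (f₁ s) s)
    (hf₁ : ∀ s ∈ Ioo (-M) M, HasDerivAt f₁ 0 s) :
    ∃ a b : ℝ, ∀ s ∈ Ioo (-M) M, f s = a + b * s := by
  have hconv : Convex ℝ (Ioo (-M) M) := convex_Ioo _ _
  have h0 : (0:ℝ) ∈ Ioo (-M) M := ⟨by linarith, hM⟩
  have hb : ∀ s ∈ Ioo (-M) M, f₁ s = f₁ 0 := fun s hs => const_of_deriv0 hconv hf₁ hs h0
  have hg : ∀ s ∈ Ioo (-M) M, HasDerivAt (fun s => f s - f₁ 0 * s) 0 s := by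
    intro s hs
    have h := (hf s hs).sub ((hasDerivAt_id s).const_mul (f₁ 0))
    rw [hb s hs] at h
    simp only [mul_one, sub_self] at h
    exact h
  refine ⟨f 0, f₁ 0, fun s hs => ?_⟩
  have := const_of_deriv0 hconv hg hs h0
  linarith [this]

lemma deriv_under {M : ℝ} (hM : 0 < M) {v vs : ℝ × ℝ → ℝ}
    (hv : ContinuousOn v (Ioo (-M) M ×ˢ (univ : Set ℝ)))
    (hvs : ContinuousOn vs (Ioo (-M) M ×ˢ (univ : Set ℝ)))
    (hd : ∀ p ∈ Ioo (-M) M ×ˢ (univ : Set ℝ),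
      HasDerivAt (fun s => v (s, p.2)) (vs p) p.1)
    {w : ℝ → ℝ} (hw : Continuous w) (hwb : ∀ θ, |w θ| ≤ 1)
    {s₀ : ℝ} (hs₀ : s₀ ∈ Ioo (-M) M) :
    HasDerivAt (fun s => ∫ θ in (0:ℝ)..(2*π), v (s, θ) * w θ)
      (∫ θ in (0:ℝ)..(2*π), vs (s₀, θ) * w θ) s₀ := by
  obtain ⟨hs₀1, hs₀2⟩ := hs₀
  set δ : ℝ := min (s₀ + M) (M - s₀) / 2 with hδdef
  have hδ : 0 < δ := by
    have : 0 < min (s₀ + M) (M - s₀) := lt_min (by linarith) (by linarith)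
    positivity
  have hsub : Icc (s₀ - δ) (s₀ + δ) ⊆ Ioo (-M) M := by
    intro x hx
    have h1 := min_le_left (s₀ + M) (M - s₀)
    have h2 := min_le_right (s₀ + M) (M - s₀)
    constructor
    · have := hx.1; simp only [hδdef] at this ⊢; linarith
    · have := hx.2; simp only [hδdef] at this ⊢; linarith
  have hball : Metric.ball s₀ δ ⊆ Icc (s₀ - δ) (s₀ + δ) := by
    intro x hx
    rw [Real.ball_eq_Ioo] at hx
    exact ⟨hx.1.le, hx.2.le⟩
  -- compact set and bound
  have hK : IsCompact (Icc (s₀ - δ) (s₀ + δ) ×ˢ Icc (0:ℝ) (2*π)) :=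
    isCompact_Icc.prod isCompact_Icc
  have hKsub : Icc (s₀ - δ) (s₀ + δ) ×ˢ Icc (0:ℝ) (2*π) ⊆ Ioo (-M) M ×ˢ (univ : Set ℝ) :=
    Set.prod_mono hsub (subset_univ _)
  obtain ⟨C, hC⟩ := hK.exists_bound_of_continuousOn (hvs.mono hKsub)
  have hCpos : 0 ≤ C := by
    have := hC (s₀, 0) ⟨⟨by linarith, by linarith⟩, ⟨le_refl 0, by positivity⟩⟩
    exact le_trans (norm_nonneg _) this
  have hline : ∀ x ∈ Ioo (-M) M, Continuous (fun θ => v (x, θ)) := by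
    intro x hx
    exact hv.comp_continuous (continuous_const.prodMk continuous_id)
      (fun θ => ⟨hx, trivial⟩)
  have hline' : ∀ x ∈ Ioo (-M) M, Continuous (fun θ => vs (x, θ)) := by
    intro x hx
    exact hvs.comp_continuous (continuous_const.prodMk continuous_id)
      (fun θ => ⟨hx, trivial⟩)
  have main := hasDerivAt_integral_of_dominated_loc_of_deriv_le (F := fun x θ => v (x, θ) * w θ)
    (F' := fun x θ => vs (x, θ) * w θ) (x₀ := s₀) (a := (0:ℝ)) (b := 2*π)
    (μ := volume) (bound := fun _ => C) (Metric.ball_mem_nhds s₀ hδ)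
    ?_ ?_ ?_ ?_ ?_ ?_
  · exact main.2
  · -- measurability
    filter_upwards [isOpen_Ioo.mem_nhds ⟨hs₀1, hs₀2⟩] with x hx
    exact ((hline x hx).mul hw).aestronglyMeasurable
  · exact ((hline s₀ ⟨hs₀1, hs₀2⟩).mul hw).intervalIntegrable _ _
  · exact ((hline' s₀ ⟨hs₀1, hs₀2⟩).mul hw).aestronglyMeasurable
  · -- bound
    refine Filter.Eventually.of_forall (fun θ => ?_)
    intro hθ x hx
    have hθ' : θ ∈ Icc (0:ℝ) (2*π) := by
      rw [uIoc_of_le (by positivity : (0:ℝ) ≤ 2*π)] at hθ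
      exact ⟨hθ.1.le, hθ.2⟩
    have hx' : x ∈ Icc (s₀ - δ) (s₀ + δ) := hball hx
    have h1 : ‖vs (x, θ)‖ ≤ C := hC (x, θ) ⟨hx', hθ'⟩
    calc ‖vs (x, θ) * w θ‖ = ‖vs (x, θ)‖ * |w θ| := by
          rw [norm_mul]; rfl
      _ ≤ C * 1 := mul_le_mul h1 (hwb θ) (abs_nonneg _) hCpos
      _ = C := mul_one C
  · exact intervalIntegrable_const
  · refine Filter.Eventually.of_forall (fun θ => ?_)
    intro _ x hx
    have hx' : x ∈ Ioo (-M) M := hsub (hball hx)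
    exact (hd (x, θ) ⟨hx', trivial⟩).mul_const (w θ)

lemma fourier_deriv {M ε : ℝ} (hM : 0 < M) {u : ℝ × ℝ → ℝ}
    (hper : ∀ s θ : ℝ, u (s, θ + 2 * π) = u (s, θ))
    (hreg : ContDiffOn ℝ 2 u (Icc (-M) M ×ˢ (univ : Set ℝ)))
    (hharm : ∀ s ∈ Icc (-M) M, ∀ θ : ℝ,
      deriv (fun s' => deriv (fun s'' => u (s'', θ)) s') s +
        deriv (fun θ' => deriv (fun θ'' => u (s, θ'')) θ') θ = 0)
    (hbound : ∀ s ∈ Icc (-M) M, ∀ θ : ℝ, |u (s, θ)| ≤ ε)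
    (n : ℕ) {w w' : ℝ → ℝ}
    (hw : ∀ θ, HasDerivAt w (w' θ) θ)
    (hw' : ∀ θ, HasDerivAt w' (-(n:ℝ)^2 * w θ) θ)
    (hwp : w (2*π) = w 0) (hw'p : w' (2*π) = w' 0)
    (hwb : ∀ θ, |w θ| ≤ 1) :
    ContinuousOn (fun s => ∫ θ in (0:ℝ)..(2*π), u (s, θ) * w θ) (Icc (-M) M) ∧
    ∃ f₁ : ℝ → ℝ, ∀ s ∈ Ioo (-M) M,
      HasDerivAt (fun s' => ∫ θ in (0:ℝ)..(2*π), u (s', θ) * w θ) (f₁ s) s ∧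
      HasDerivAt f₁ ((n:ℝ)^2 * ∫ θ in (0:ℝ)..(2*π), u (s, θ) * w θ) s := by
  have hε : 0 ≤ ε := le_trans (abs_nonneg _) (hbound M ⟨by linarith, le_refl M⟩ 0)
  have hwc : Continuous w := by
    rw [continuous_iff_continuousAt]; exact fun θ => (hw θ).continuousAt
  have hw'c : Continuous w' := by
    rw [continuous_iff_continuousAt]; exact fun θ => (hw' θ).continuousAt
  set O : Set (ℝ × ℝ) := Ioo (-M) M ×ˢ (univ : Set ℝ) with hOdef
  have hO : IsOpen O := isOpen_Ioo.prod isOpen_univ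
  have hOsub : O ⊆ Icc (-M) M ×ˢ (univ : Set ℝ) :=
    Set.prod_mono Ioo_subset_Icc_self (subset_refl _)
  have hu2 : ContDiffOn ℝ 2 u O := hreg.mono hOsub
  set P : ℝ × ℝ → ℝ := fun p => fderiv ℝ u p (1, 0) with hPdef
  set Q : ℝ × ℝ → ℝ := fun p => fderiv ℝ u p (0, 1) with hQdef
  have hfd1 : ContDiffOn ℝ 1 (fderiv ℝ u) O := hu2.fderiv_of_isOpen hO (by norm_num)
  have hP1 : ContDiffOn ℝ 1 P O :=
    (ContinuousLinearMap.apply ℝ ℝ ((1:ℝ), (0:ℝ))).contDiff.comp_contDiffOn hfd1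
  have hQ1 : ContDiffOn ℝ 1 Q O :=
    (ContinuousLinearMap.apply ℝ ℝ ((0:ℝ), (1:ℝ))).contDiff.comp_contDiffOn hfd1
  set P1 : ℝ × ℝ → ℝ := fun p => fderiv ℝ P p (1, 0) with hP1def
  set Q1 : ℝ × ℝ → ℝ := fun p => fderiv ℝ Q p (0, 1) with hQ1def
  have hP1c : ContinuousOn P1 O :=
    (ContinuousLinearMap.apply ℝ ℝ ((1:ℝ), (0:ℝ))).continuous.comp_continuousOn
      (hP1.continuousOn_fderiv_of_isOpen hO (le_refl 1))
  have hQ1c : ContinuousOn Q1 O :=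
    (ContinuousLinearMap.apply ℝ ℝ ((0:ℝ), (1:ℝ))).continuous.comp_continuousOn
      (hQ1.continuousOn_fderiv_of_isOpen hO (le_refl 1))
  -- pointwise derivatives along lines
  have hus : ∀ s ∈ Ioo (-M) M, ∀ θ : ℝ,
      HasDerivAt (fun s' => u (s', θ)) (P (s, θ)) s := by
    intro s hs θ
    have hd : DifferentiableAt ℝ u (s, θ) :=
      (hu2.contDiffAt (hO.mem_nhds ⟨hs, trivial⟩)).differentiableAt (by norm_num)
    exact hd.hasFDerivAt.comp_hasDerivAt s ((hasDerivAt_id s).prodMk (hasDerivAt_const s θ))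
  have huθ : ∀ s ∈ Ioo (-M) M, ∀ θ : ℝ,
      HasDerivAt (fun θ' => u (s, θ')) (Q (s, θ)) θ := by
    intro s hs θ
    have hd : DifferentiableAt ℝ u (s, θ) :=
      (hu2.contDiffAt (hO.mem_nhds ⟨hs, trivial⟩)).differentiableAt (by norm_num)
    exact hd.hasFDerivAt.comp_hasDerivAt θ ((hasDerivAt_const θ s).prodMk (hasDerivAt_id θ))
  have hPs : ∀ s ∈ Ioo (-M) M, ∀ θ : ℝ,
      HasDerivAt (fun s' => P (s', θ)) (P1 (s, θ)) s := by
    intro s hs θ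
    have hd : DifferentiableAt ℝ P (s, θ) :=
      (hP1.contDiffAt (hO.mem_nhds ⟨hs, trivial⟩)).differentiableAt one_ne_zero
    exact hd.hasFDerivAt.comp_hasDerivAt s ((hasDerivAt_id s).prodMk (hasDerivAt_const s θ))
  have hQθ : ∀ s ∈ Ioo (-M) M, ∀ θ : ℝ,
      HasDerivAt (fun θ' => Q (s, θ')) (Q1 (s, θ)) θ := by
    intro s hs θ
    have hd : DifferentiableAt ℝ Q (s, θ) :=
      (hQ1.contDiffAt (hO.mem_nhds ⟨hs, trivial⟩)).differentiableAt one_ne_zero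
    exact hd.hasFDerivAt.comp_hasDerivAt θ ((hasDerivAt_const θ s).prodMk (hasDerivAt_id θ))
  -- harmonicity in terms of P1 Q1
  have harm' : ∀ s ∈ Ioo (-M) M, ∀ θ : ℝ, P1 (s, θ) = -Q1 (s, θ) := by
    intro s hs θ
    have h := hharm s (Ioo_subset_Icc_self hs) θ
    have e1 : deriv (fun s' => deriv (fun s'' => u (s'', θ)) s') s = P1 (s, θ) := by
      have hev : (fun s' => deriv (fun s'' => u (s'', θ)) s') =ᶠ[𝓝 s]
          (fun s' => P (s', θ)) := by
        filter_upwards [isOpen_Ioo.mem_nhds hs] with x hx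
        exact (hus x hx θ).deriv
      rw [hev.deriv_eq]
      exact (hPs s hs θ).deriv
    have e2 : deriv (fun θ' => deriv (fun θ'' => u (s, θ'')) θ') θ = Q1 (s, θ) := by
      have hfe : (fun θ' => deriv (fun θ'' => u (s, θ'')) θ') = fun θ' => Q (s, θ') := by
        funext θ'; exact (huθ s hs θ').deriv
      rw [hfe]
      exact (hQθ s hs θ).deriv
    rw [e1, e2] at h
    linarith
  -- periodicity of u and Q at the endpoints
  have uper : ∀ s : ℝ, u (s, 2*π) = u (s, 0) := by
    intro s
    have := hper s 0
    simpa using this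
  have Qper : ∀ s ∈ Ioo (-M) M, Q (s, 2*π) = Q (s, 0) := by
    intro s hs
    have h1 : HasDerivAt (fun θ => u (s, θ + 2*π)) (Q (s, 0 + 2*π) * 1) 0 := by
      have := (huθ s hs (0 + 2*π)).comp 0 ((hasDerivAt_id 0).add_const (2*π))
      exact this
    have h2 : (fun θ : ℝ => u (s, θ + 2*π)) = fun θ => u (s, θ) :=
      funext (fun θ => hper s θ)
    rw [h2] at h1
    have := h1.unique (huθ s hs 0)
    simpa using this
  -- line continuity
  have lineCont : ∀ (g : ℝ × ℝ → ℝ), ContinuousOn g O → ∀ s ∈ Ioo (-M) M,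
      Continuous (fun θ => g (s, θ)) := by
    intro g hg s hs
    exact hg.comp_continuous (continuous_const.prodMk continuous_id)
      (fun θ => ⟨hs, trivial⟩)
  -- derivative structure
  refine ⟨?_, fun s => ∫ θ in (0:ℝ)..(2*π), P (s, θ) * w θ, fun s hs => ?_⟩
  · -- continuity on Icc
    intro s₀ hs₀
    apply intervalIntegral.continuousWithinAt_of_dominated_interval
      (bound := fun _ => ε)
    · filter_upwards [self_mem_nhdsWithin] with x hx
      have hc : Continuous (fun θ => u (x, θ)) :=
        hreg.continuousOn.comp_continuous (continuous_const.prodMk continuous_id)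
          (fun θ => ⟨hx, trivial⟩)
      exact (hc.mul hwc).aestronglyMeasurable
    · filter_upwards [self_mem_nhdsWithin] with x hx
      refine Filter.Eventually.of_forall (fun θ => ?_)
      intro _
      calc ‖u (x, θ) * w θ‖ = |u (x, θ)| * |w θ| := by rw [norm_mul]; rfl
        _ ≤ ε * 1 := mul_le_mul (hbound x hx θ) (hwb θ) (abs_nonneg _) hε
        _ = ε := mul_one ε
    · exact intervalIntegrable_const
    · refine Filter.Eventually.of_forall (fun θ => ?_)
      intro _
      apply ContinuousWithinAt.mul _ continuousWithinAt_const
      have hc : ContinuousOn (fun x => u (x, θ)) (Icc (-M) M) :=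
        hreg.continuousOn.comp
          (Continuous.continuousOn (continuous_id.prodMk continuous_const))
          (fun x hx => ⟨hx, trivial⟩)
      exact hc.continuousWithinAt hs₀
  · constructor
    · exact deriv_under hM hu2.continuousOn hP1.continuousOn
        (fun p hp => hus p.1 hp.1 p.2) hwc hwb hs
    · have hder := deriv_under hM hP1.continuousOn hP1c
        (fun p hp => hPs p.1 hp.1 p.2) hwc hwb hs
      have key : (∫ θ in (0:ℝ)..(2*π), P1 (s, θ) * w θ) =
          (n:ℝ)^2 * ∫ θ in (0:ℝ)..(2*π), u (s, θ) * w θ := by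
        have m1 : (∫ θ in (0:ℝ)..(2*π), P1 (s, θ) * w θ) =
            - ∫ θ in (0:ℝ)..(2*π), w θ * Q1 (s, θ) := by
          rw [← intervalIntegral.integral_neg]
          apply intervalIntegral.integral_congr
          intro θ _
          show P1 (s, θ) * w θ = -(w θ * Q1 (s, θ))
          rw [harm' s hs θ]; ring
        have m2 : (∫ θ in (0:ℝ)..(2*π), w θ * Q1 (s, θ)) =
            w (2*π) * Q (s, 2*π) - w 0 * Q (s, 0)
              - ∫ θ in (0:ℝ)..(2*π), w' θ * Q (s, θ) :=
          intervalIntegral.integral_mul_deriv_eq_deriv_mul (fun x _ => hw x) (fun x _ => hQθ s hs x)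
            (hw'c.intervalIntegrable _ _)
            ((lineCont Q1 hQ1c s hs).intervalIntegrable _ _)
        have m3 : (∫ θ in (0:ℝ)..(2*π), w' θ * Q (s, θ)) =
            w' (2*π) * u (s, 2*π) - w' 0 * u (s, 0)
              - ∫ θ in (0:ℝ)..(2*π), (-(n:ℝ)^2 * w θ) * u (s, θ) :=
          intervalIntegral.integral_mul_deriv_eq_deriv_mul (fun x _ => hw' x) (fun x _ => huθ s hs x)
            ((continuous_const.mul hwc).intervalIntegrable _ _)
            ((lineCont Q (hQ1.continuousOn) s hs).intervalIntegrable _ _)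
        have m4 : (∫ θ in (0:ℝ)..(2*π), (-(n:ℝ)^2 * w θ) * u (s, θ)) =
            (-(n:ℝ)^2) * ∫ θ in (0:ℝ)..(2*π), u (s, θ) * w θ := by
          rw [← intervalIntegral.integral_const_mul]
          apply intervalIntegral.integral_congr
          intro θ _
          show (-(n:ℝ)^2 * w θ) * u (s, θ) = (-(n:ℝ)^2) * (u (s, θ) * w θ)
          ring
        rw [m1, m2, hwp, Qper s hs, m3, hw'p, uper, m4]
        ring
      rw [key] at hder
      exact hder

lemma cyl_coeff {M ε : ℝ} (hM : 1 ≤ M) (hε : 0 < ε) {u : ℝ × ℝ → ℝ}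
    (hper : ∀ s θ : ℝ, u (s, θ + 2 * π) = u (s, θ))
    (hreg : ContDiffOn ℝ 2 u (Icc (-M) M ×ˢ (univ : Set ℝ)))
    (hharm : ∀ s ∈ Icc (-M) M, ∀ θ : ℝ,
      deriv (fun s' => deriv (fun s'' => u (s'', θ)) s') s +
        deriv (fun θ' => deriv (fun θ'' => u (s, θ'')) θ') θ = 0)
    (hbound : ∀ s ∈ Icc (-M) M, ∀ θ : ℝ, |u (s, θ)| ≤ ε)
    {n : ℕ} (hn : 1 ≤ n) {w w' : ℝ → ℝ}
    (hw : ∀ θ, HasDerivAt w (w' θ) θ)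
    (hw' : ∀ θ, HasDerivAt w' (-(n:ℝ)^2 * w θ) θ)
    (hwp : w (2*π) = w 0) (hw'p : w' (2*π) = w' 0)
    (hwb : ∀ θ, |w θ| ≤ 1) :
    ∃ A C : ℝ,
      (∀ s ∈ Icc (-M) M, (∫ θ in (0:ℝ)..(2*π), u (s, θ) * w θ) =
        A * exp ((n:ℝ)*s) + C * exp (-((n:ℝ)*s))) ∧
      |A| ≤ 4*π*ε*exp (-((n:ℝ)*M)) ∧ |C| ≤ 4*π*ε*exp (-((n:ℝ)*M)) := by
  have hM0 : 0 < M := by linarith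
  obtain ⟨hcont, f₁, hf⟩ := fourier_deriv hM0 hper hreg hharm hbound n hw hw' hwp hw'p hwb
  have hk : 0 < (n:ℝ) := by exact_mod_cast Nat.pos_of_ne_zero (by omega)
  have hk1 : 1 ≤ (n:ℝ) := by exact_mod_cast hn
  obtain ⟨A, C, hrep⟩ := ode_pos hM0 hk (fun s hs => (hf s hs).1) (fun s hs => (hf s hs).2)
  have hgc : Continuous (fun s => A * exp ((n:ℝ)*s) + C * exp (-((n:ℝ)*s))) := by
    continuity
  have hrep' := extend_eq hM0 hcont hgc hrep
  -- bound on f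
  have hfb : ∀ s ∈ Icc (-M) M, |(∫ θ in (0:ℝ)..(2*π), u (s, θ) * w θ)| ≤ 2*π*ε := by
    intro s hs
    have h := intervalIntegral.norm_integral_le_of_norm_le_const
      (C := ε) (f := fun θ => u (s, θ) * w θ) (a := 0) (b := 2*π) ?_
    · rw [Real.norm_eq_abs] at h
      calc |(∫ θ in (0:ℝ)..(2*π), u (s, θ) * w θ)| ≤ ε * |2*π - 0| := h
        _ = 2*π*ε := by rw [abs_of_pos (by rw [sub_zero]; positivity : (0:ℝ) < 2*π - 0)]; ring
    · intro θ _
      calc ‖u (s, θ) * w θ‖ = |u (s, θ)| * |w θ| := by rw [norm_mul]; rfl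
        _ ≤ ε * 1 := mul_le_mul (hbound s hs θ) (hwb θ) (abs_nonneg _) hε.le
        _ = ε := mul_one ε
  set E : ℝ := exp ((n:ℝ)*M) with hEdef
  set E' : ℝ := exp (-((n:ℝ)*M)) with hE'def
  have hEE' : E * E' = 1 := by rw [hEdef, hE'def, ← exp_add]; simp
  have hEpos : 0 < E := exp_pos _
  have hE'pos : 0 < E' := exp_pos _
  have hE2 : 2 ≤ E := by
    have h1 : (1:ℝ) ≤ (n:ℝ)*M := by
      have := mul_le_mul hk1 hM zero_le_one (le_trans zero_le_one hk1)
      linarith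
    calc (2:ℝ) ≤ exp 1 := by
          have := Real.add_one_le_exp (1:ℝ); linarith
      _ ≤ E := by rw [hEdef]; exact exp_le_exp.mpr h1
  have hE'half : E' ≤ 1/2 := by
    nlinarith [hEE', hE2, hE'pos, hEpos]
  have hsq : E'*E' ≤ 1/4 := by nlinarith [hE'half, hE'pos]
  have hd : 0 < E*E - E'*E' := by nlinarith [hE2, hsq]
  have eq1 := hrep' M ⟨by linarith, le_refl M⟩
  have eq2 := hrep' (-M) ⟨le_refl (-M), by linarith⟩
  rw [show (n:ℝ) * (-M) = -((n:ℝ)*M) by ring] at eq2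
  rw [show -(-((n:ℝ)*M)) = (n:ℝ)*M by ring] at eq2
  -- eq1 : f M = A * E + C * E',  eq2 : f (-M) = A * E' + C * E
  have key : ∀ X g1 g2 : ℝ, |g1| ≤ 2*π*ε → |g2| ≤ 2*π*ε →
      X * (E*E - E'*E') = g1 * E - g2 * E' → |X| ≤ 4*π*ε*E' := by
    intro X g1 g2 hg1 hg2 hX
    obtain ⟨hg1a, hg1b⟩ := abs_le.mp hg1
    obtain ⟨hg2a, hg2b⟩ := abs_le.mp hg2
    have e3 : E' * (E * E) = E := by linear_combination E * hEE'
    have hcube : E'*E'*E' ≤ 1/8 := by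
      have h1 : E'*(E'*E') ≤ (1/2)*(1/4) :=
        mul_le_mul hE'half hsq (by positivity) (by norm_num)
      nlinarith [h1]
    have hlin : 2*E' + 4*(E'*E'*E') ≤ 2*E := by linarith [hcube, hE'half, hE2]
    have hc : (0:ℝ) ≤ π*ε := by positivity
    have hmul := mul_le_mul_of_nonneg_left hlin hc
    have hq : 4*π*ε*E'*(E*E - E'*E') = 4*π*ε*E - 4*π*ε*(E'*E'*E') := by
      linear_combination (4*π*ε) * e3
    have h4 : 2*π*ε*(E+E') ≤ 4*π*ε*E'*(E*E - E'*E') := by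
      rw [hq]; linarith [hmul]
    rw [abs_le]
    constructor
    · have h3 : -X * (E*E - E'*E') ≤ 2*π*ε*(E+E') := by
        have u1 : -(g1) * E ≤ 2*π*ε*E :=
          mul_le_mul_of_nonneg_right (by linarith) hEpos.le
        have u2 : g2 * E' ≤ 2*π*ε*E' :=
          mul_le_mul_of_nonneg_right (by linarith) hE'pos.le
        linarith [hX, u1, u2]
      have := le_of_mul_le_mul_right (h3.trans h4) hd
      linarith
    · have h3 : X * (E*E - E'*E') ≤ 2*π*ε*(E+E') := by
        have u1 : g1 * E ≤ 2*π*ε*E :=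
          mul_le_mul_of_nonneg_right (by linarith) hEpos.le
        have u2 : -(g2) * E' ≤ 2*π*ε*E' :=
          mul_le_mul_of_nonneg_right (by linarith) hE'pos.le
        linarith [hX, u1, u2]
      exact le_of_mul_le_mul_right (h3.trans h4) hd
  refine ⟨A, C, hrep', ?_, ?_⟩
  · refine key A _ _ (hfb M ⟨by linarith, le_refl M⟩) (hfb (-M) ⟨le_refl (-M), by linarith⟩) ?_
    linear_combination (-(E)) * eq1 + E' * eq2
  · refine key C _ _ (hfb (-M) ⟨le_refl (-M), by linarith⟩) (hfb M ⟨by linarith, le_refl M⟩) ?_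
    linear_combination (-(E)) * eq2 + E' * eq1

lemma cyl_zero {M ε : ℝ} (hM : 1 ≤ M) (hε : 0 < ε) {u : ℝ × ℝ → ℝ}
    (hper : ∀ s θ : ℝ, u (s, θ + 2 * π) = u (s, θ))
    (hreg : ContDiffOn ℝ 2 u (Icc (-M) M ×ˢ (univ : Set ℝ)))
    (hharm : ∀ s ∈ Icc (-M) M, ∀ θ : ℝ,
      deriv (fun s' => deriv (fun s'' => u (s'', θ)) s') s +
        deriv (fun θ' => deriv (fun θ'' => u (s, θ'')) θ') θ = 0)
    (hbound : ∀ s ∈ Icc (-M) M, ∀ θ : ℝ, |u (s, θ)| ≤ ε) :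
    ∃ a b : ℝ, (∀ s ∈ Icc (-M) M, (∫ θ in (0:ℝ)..(2*π), u (s, θ)) = a + b * s) ∧
      |a| ≤ 2*π*ε ∧ |b| ≤ 2*π*ε/M := by
  have hM0 : 0 < M := by linarith
  have hw : ∀ θ : ℝ, HasDerivAt (fun _ : ℝ => (1:ℝ)) ((fun _ : ℝ => (0:ℝ)) θ) θ :=
    fun θ => hasDerivAt_const θ 1
  have hw' : ∀ θ : ℝ, HasDerivAt (fun _ : ℝ => (0:ℝ)) (-((0:ℕ):ℝ)^2 * (1:ℝ)) θ := by
    intro θ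
    have h := hasDerivAt_const θ (0:ℝ)
    exact h.congr_deriv (by norm_num)
  obtain ⟨hcont, f₁, hf⟩ := fourier_deriv hM0 hper hreg hharm hbound 0
    hw hw' rfl rfl (fun θ => by norm_num)
  have hf₁0 : ∀ s ∈ Ioo (-M) M, HasDerivAt f₁ 0 s := by
    intro s hs
    have h := (hf s hs).2
    convert h using 1
    norm_num
  obtain ⟨a, b, hab⟩ := ode_zero hM0 (fun s hs => (hf s hs).1) hf₁0
  have hgc : Continuous (fun s : ℝ => a + b * s) := by continuity
  have hrep := extend_eq hM0 hcont hgc hab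
  have hsimp : ∀ s : ℝ, (∫ θ in (0:ℝ)..(2*π), u (s, θ) * (1:ℝ)) =
      ∫ θ in (0:ℝ)..(2*π), u (s, θ) := by
    intro s; simp
  have hfb : ∀ s ∈ Icc (-M) M, |(∫ θ in (0:ℝ)..(2*π), u (s, θ))| ≤ 2*π*ε := by
    intro s hs
    have h := intervalIntegral.norm_integral_le_of_norm_le_const
      (C := ε) (f := fun θ => u (s, θ)) (a := 0) (b := 2*π) ?_
    · rw [Real.norm_eq_abs] at h
      calc |(∫ θ in (0:ℝ)..(2*π), u (s, θ))| ≤ ε * |2*π - 0| := h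
        _ = 2*π*ε := by rw [abs_of_pos (by rw [sub_zero]; positivity : (0:ℝ) < 2*π - 0)]; ring
    · intro θ _
      rw [Real.norm_eq_abs]
      exact hbound s hs θ
  have hrep' : ∀ s ∈ Icc (-M) M, (∫ θ in (0:ℝ)..(2*π), u (s, θ)) = a + b * s := by
    intro s hs
    rw [← hsimp s]
    exact hrep s hs
  refine ⟨a, b, hrep', ?_, ?_⟩
  · have h0 : (0:ℝ) ∈ Icc (-M) M := ⟨by linarith, by linarith⟩
    have := hrep' 0 h0
    have hb := hfb 0 h0
    rw [this] at hb
    simpa using hb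
  · have eqM := hrep' M ⟨by linarith, le_refl M⟩
    have eqm := hrep' (-M) ⟨le_refl (-M), by linarith⟩
    have h2 : b * (2*M) = (∫ θ in (0:ℝ)..(2*π), u (M, θ)) -
        ∫ θ in (0:ℝ)..(2*π), u (-M, θ) := by
      linear_combination (-1) * eqM + eqm
    have habs : |b| * (2*M) ≤ 4*π*ε := by
      have : |b * (2*M)| ≤ 4*π*ε := by
        rw [h2]
        have h3 := hfb M ⟨by linarith, le_refl M⟩
        have h4 := hfb (-M) ⟨le_refl (-M), by linarith⟩
        calc |(∫ θ in (0:ℝ)..(2*π), u (M, θ)) - ∫ θ in (0:ℝ)..(2*π), u (-M, θ)|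
            ≤ |(∫ θ in (0:ℝ)..(2*π), u (M, θ))| + |(∫ θ in (0:ℝ)..(2*π), u (-M, θ))| :=
              abs_sub _ _
          _ ≤ 4*π*ε := by linarith
      rw [abs_mul, abs_of_pos (by linarith : (0:ℝ) < 2*M)] at this
      exact this
    rw [le_div_iff₀ hM0]
    linarith

/-- Fourier coefficient estimates for a bounded harmonic function on the cylinder
`[-M,M] × S¹` (Lemma 3.3): the coefficients of the expansion satisfy `|a₀| ≤ ε`,
`|b₀| ≤ 2ε/M` and `|aₙ|,|bₙ|,|cₙ|,|dₙ| ≤ 4 ε e^{-nM}`. -/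
theorem harmonic_cylinder_coefficients
    (M ε : ℝ) (hM : 1 ≤ M) (hε : 0 < ε) (u : ℝ × ℝ → ℝ)
    (hper : ∀ s θ : ℝ, u (s, θ + 2 * Real.pi) = u (s, θ))
    (hreg : ContDiffOn ℝ 2 u (Set.Icc (-M) M ×ˢ (Set.univ : Set ℝ)))
    (hharm : ∀ s ∈ Set.Icc (-M) M, ∀ θ : ℝ,
      deriv (fun s' => deriv (fun s'' => u (s'', θ)) s') s +
        deriv (fun θ' => deriv (fun θ'' => u (s, θ'')) θ') θ = 0)
    (hbound : ∀ s ∈ Set.Icc (-M) M, ∀ θ : ℝ, |u (s, θ)| ≤ ε) :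
    ∃ (a₀ b₀ : ℝ) (a b c d : ℕ → ℝ),
      (∀ s ∈ Set.Icc (-M) M,
        (1 / (2 * Real.pi)) * ∫ θ in (0:ℝ)..(2 * Real.pi), u (s, θ) = a₀ + b₀ * s ∧
        ∀ n : ℕ, 1 ≤ n →
          ((1 / Real.pi) * ∫ θ in (0:ℝ)..(2 * Real.pi), u (s, θ) * Real.cos (n * θ) =
              a n * Real.exp (n * s) + c n * Real.exp (-(n * s))) ∧
          ((1 / Real.pi) * ∫ θ in (0:ℝ)..(2 * Real.pi), u (s, θ) * Real.sin (n * θ) =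
              b n * Real.exp (n * s) + d n * Real.exp (-(n * s)))) ∧
      |a₀| ≤ ε ∧ |b₀| ≤ 2 * ε / M ∧
      (∀ n : ℕ, 1 ≤ n →
        |a n| ≤ 4 * ε * Real.exp (-(n * M)) ∧ |b n| ≤ 4 * ε * Real.exp (-(n * M)) ∧
        |c n| ≤ 4 * ε * Real.exp (-(n * M)) ∧ |d n| ≤ 4 * ε * Real.exp (-(n * M))) := by
  have hM0 : 0 < M := by linarith
  obtain ⟨a0, b0, hz, ha0, hb0⟩ := cyl_zero hM hε hper hreg hharm hbound
  have Hn : ∀ n : ℕ, ∃ AA BB CC DD : ℝ, 1 ≤ n →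
      ((∀ s ∈ Set.Icc (-M) M,
        ((1 / Real.pi) * ∫ θ in (0:ℝ)..(2 * Real.pi), u (s, θ) * Real.cos (n * θ) =
            AA * Real.exp (n * s) + CC * Real.exp (-(n * s))) ∧
        ((1 / Real.pi) * ∫ θ in (0:ℝ)..(2 * Real.pi), u (s, θ) * Real.sin (n * θ) =
            BB * Real.exp (n * s) + DD * Real.exp (-(n * s)))) ∧
      |AA| ≤ 4 * ε * Real.exp (-(n * M)) ∧ |BB| ≤ 4 * ε * Real.exp (-(n * M)) ∧
      |CC| ≤ 4 * ε * Real.exp (-(n * M)) ∧ |DD| ≤ 4 * ε * Real.exp (-(n * M))) := by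
    intro n
    by_cases hn : 1 ≤ n
    · have hlin : ∀ θ : ℝ, HasDerivAt (fun t : ℝ => (n:ℝ) * t) ((n:ℝ)) θ := by
        intro θ
        simpa using (hasDerivAt_id θ).const_mul (n:ℝ)
      have hsin2 : Real.sin ((n:ℝ)*(2*π)) = 0 := by
        simpa using Real.sin_add_nat_mul_two_pi 0 n
      have hcos2 : Real.cos ((n:ℝ)*(2*π)) = 1 := Real.cos_nat_mul_two_pi n
      -- cosine weight
      have hwcos : ∀ θ : ℝ, HasDerivAt (fun t => Real.cos ((n:ℝ)*t))
          ((fun t => -Real.sin ((n:ℝ)*t) * (n:ℝ)) θ) θ := by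
        intro θ
        exact (Real.hasDerivAt_cos ((n:ℝ)*θ)).comp θ (hlin θ)
      have hwcos' : ∀ θ : ℝ, HasDerivAt (fun t => -Real.sin ((n:ℝ)*t) * (n:ℝ))
          (-(n:ℝ)^2 * Real.cos ((n:ℝ)*θ)) θ := by
        intro θ
        have h := (((Real.hasDerivAt_sin ((n:ℝ)*θ)).comp θ (hlin θ)).neg).mul_const (n:ℝ)
        exact h.congr_deriv (by ring)
      obtain ⟨A, C, hAC, hAb, hCb⟩ := cyl_coeff hM hε hper hreg hharm hbound hn
        hwcos hwcos' (by rw [hcos2]; simp)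
        (by rw [hsin2]; simp) (fun θ => Real.abs_cos_le_one _)
      -- sine weight
      have hwsin : ∀ θ : ℝ, HasDerivAt (fun t => Real.sin ((n:ℝ)*t))
          ((fun t => Real.cos ((n:ℝ)*t) * (n:ℝ)) θ) θ := by
        intro θ
        exact (Real.hasDerivAt_sin ((n:ℝ)*θ)).comp θ (hlin θ)
      have hwsin' : ∀ θ : ℝ, HasDerivAt (fun t => Real.cos ((n:ℝ)*t) * (n:ℝ))
          (-(n:ℝ)^2 * Real.sin ((n:ℝ)*θ)) θ := by
        intro θ
        have h := ((Real.hasDerivAt_cos ((n:ℝ)*θ)).comp θ (hlin θ)).mul_const (n:ℝ)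
        exact h.congr_deriv (by ring)
      obtain ⟨B, D, hBD, hBb, hDb⟩ := cyl_coeff hM hε hper hreg hharm hbound hn
        hwsin hwsin' (by rw [hsin2]; simp)
        (by rw [hcos2]; simp) (fun θ => Real.abs_sin_le_one _)
      have hdiv : ∀ X : ℝ, |X| ≤ 4*π*ε*Real.exp (-((n:ℝ)*M)) →
          |X / π| ≤ 4 * ε * Real.exp (-((n:ℝ) * M)) := by
        intro X hX
        rw [abs_div, abs_of_pos Real.pi_pos, div_le_iff₀ Real.pi_pos]
        calc |X| ≤ 4*π*ε*Real.exp (-((n:ℝ)*M)) := hX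
          _ = 4 * ε * Real.exp (-((n:ℝ) * M)) * π := by ring
      refine ⟨A/π, B/π, C/π, D/π, fun _ => ⟨fun s hs => ⟨?_, ?_⟩, hdiv A hAb, hdiv B hBb,
        hdiv C hCb, hdiv D hDb⟩⟩
      · rw [hAC s hs]; ring
      · rw [hBD s hs]; ring
    · exact ⟨0, 0, 0, 0, fun h => absurd h hn⟩
  choose a b c d hh using Hn
  refine ⟨a0/(2*π), b0/(2*π), a, b, c, d, fun s hs => ⟨?_, fun n hn => (hh n hn).1 s hs⟩,
    ?_, ?_, fun n hn => (hh n hn).2⟩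
  · rw [hz s hs]; ring
  · rw [abs_div, abs_of_pos (by positivity : (0:ℝ) < 2*π), div_le_iff₀ (by positivity : (0:ℝ) < 2*π)]
    calc |a0| ≤ 2*π*ε := ha0
      _ = ε * (2*π) := by ring
  · have hpe : 0 < π*ε := mul_pos Real.pi_pos hε
    have hb0' : |b0| * M ≤ 2*π*ε := (le_div_iff₀ hM0).mp hb0
    rw [abs_div, abs_of_pos (by positivity : (0:ℝ) < 2*π),
      div_le_div_iff₀ (by positivity : (0:ℝ) < 2*π) hM0]
    nlinarith [hb0']
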